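/- Let A be a d × d real matrix with ‖e^{tA}‖ ≤ C e^{−λ t} for all t ≥ 0, where C ≥ 1 and λ > 0, and let B(t) be a continuous matrix-valued function on [t₀, ∞) with B(t) → 0 as t → ∞. Then for any 0 < μ < λ there exist a time t₁ ≥ t₀ and a constant C′ > 0 such that the transition matrix Φ(t,s) of the perturbed linear system ẏ = (A + B(t)) y satisfies ‖Φ(t,s)‖ ≤ C′ e^{−μ (t−s)} for all t ≥ s ≥ t₁. -/

import Mathlib

open scoped Topology
open Set Filter intervalIntegral

/-- A Grönwall inequality in integral form: if a continuous nonnegative function `u`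
satisfies `u τ ≤ a + K ∫_s^τ u` on `[s, t]`, then `u t ≤ a e^{K (t - s)}`. -/
lemma gronwall_int_aux {u : ℝ → ℝ} {s t a K : ℝ} (hst : s ≤ t) (ha : 0 ≤ a) (hK : 0 ≤ K)
    (hu : Continuous u) (hu0 : ∀ τ, 0 ≤ u τ)
    (h : ∀ τ ∈ Icc s t, u τ ≤ a + K * ∫ x in s..τ, u x) :
    u t ≤ a * Real.exp (K * (t - s)) := by
  set v : ℝ → ℝ := fun x => a + K * ∫ τ in s..x, u τ with hv
  have hv' : ∀ x, HasDerivAt v (K * u x) x := by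
    intro x
    have h1 : HasDerivAt (fun y => ∫ τ in s..y, u τ) (u x) x :=
      integral_hasDerivAt_right (hu.intervalIntegrable s x)
        (hu.stronglyMeasurableAtFilter _ _) hu.continuousAt
    exact (h1.const_mul K).const_add a
  have hvnn : ∀ x ∈ Icc s t, 0 ≤ v x := by
    intro x hx
    have : 0 ≤ ∫ τ in s..x, u τ :=
      intervalIntegral.integral_nonneg hx.1 fun τ _ => hu0 τ
    have := mul_nonneg hK this
    simp only [hv]; linarith
  have key := norm_le_gronwallBound_of_norm_deriv_right_le (f := v) (f' := fun x => K * u x)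
    (δ := a) (K := K) (ε := 0) (a := s) (b := t)
    (fun x _ => (hv' x).continuousAt.continuousWithinAt)
    (fun x _ => (hv' x).hasDerivWithinAt)
    (by simp [hv, Real.norm_eq_abs, abs_of_nonneg ha])
    (fun x hx => by
      have hx' : x ∈ Icc s t := ⟨hx.1, hx.2.le⟩
      have h1 : u x ≤ v x := h x hx'
      have h2 : 0 ≤ v x := hvnn x hx'
      rw [Real.norm_eq_abs, Real.norm_eq_abs, abs_of_nonneg (mul_nonneg hK (hu0 x)),
        abs_of_nonneg h2]
      nlinarith [hu0 x])
  have := key t ⟨hst, le_refl t⟩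
  rw [gronwallBound_ε0, Real.norm_eq_abs, abs_of_nonneg (hvnn t ⟨hst, le_refl t⟩)] at this
  calc u t ≤ v t := h t ⟨hst, le_refl t⟩
    _ ≤ a * Real.exp (K * (t - s)) := this

/-- Variation of constants identity for the perturbed system. -/
lemma voc_aux {d : ℕ} (A : EuclideanSpace ℝ (Fin d) →L[ℝ] EuclideanSpace ℝ (Fin d)) (t₀ : ℝ)
    (B : ℝ → (EuclideanSpace ℝ (Fin d) →L[ℝ] EuclideanSpace ℝ (Fin d)))
    (hB_cont : ContinuousOn B (Ici t₀))
    (Φ : ℝ → ℝ → (EuclideanSpace ℝ (Fin d) →L[ℝ] EuclideanSpace ℝ (Fin d)))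
    (hΦ_init : ∀ s ∈ Ici t₀, Φ s s = ContinuousLinearMap.id ℝ _)
    (hΦ_ode : ∀ s ∈ Ici t₀, ∀ t ∈ Ici t₀,
      HasDerivAt (fun τ => Φ τ s) ((A + B t).comp (Φ t s)) t)
    {s t : ℝ} (hs : t₀ ≤ s) (hst : s ≤ t) :
    Φ t s = NormedSpace.exp ((t - s) • A)
      + ∫ τ in s..t, NormedSpace.exp ((t - τ) • A) * (B τ * Φ τ s) := by
  have hsub : Icc s t ⊆ Ici t₀ := fun x hx => le_trans hs hx.1
  have hΦc : ContinuousOn (fun τ => Φ τ s) (Icc s t) := fun x hx =>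
    ((hΦ_ode s hs x (hsub hx)).continuousAt).continuousWithinAt
  have hF' : ∀ τ ∈ Icc s t,
      HasDerivAt (fun τ => NormedSpace.exp ((t - τ) • A) * Φ τ s)
        (NormedSpace.exp ((t - τ) • A) * (B τ * Φ τ s)) τ := by
    intro τ hτ
    have h3 : HasDerivAt (fun τ : ℝ => t - τ) (-1) τ := by
      simpa using (hasDerivAt_id τ).const_sub t
    have h2 := hasDerivAt_exp_smul_const (𝕂 := ℝ) A (t - τ)
    have hexp : HasDerivAt (fun τ : ℝ => NormedSpace.exp ((t - τ) • A))
        (-(NormedSpace.exp ((t - τ) • A) * A)) τ := by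
      simpa [Function.comp_def, neg_smul, one_smul] using h2.scomp τ h3
    have h4 := hΦ_ode s hs τ (hsub hτ)
    rw [← ContinuousLinearMap.mul_def] at h4
    have h5 := hexp.mul h4
    have heq : -(NormedSpace.exp ((t - τ) • A) * A) * Φ τ s
        + NormedSpace.exp ((t - τ) • A) * ((A + B τ) * Φ τ s)
        = NormedSpace.exp ((t - τ) • A) * (B τ * Φ τ s) := by
      apply ContinuousLinearMap.ext; intro x
      simp only [ContinuousLinearMap.mul_apply, ContinuousLinearMap.add_apply,
        ContinuousLinearMap.neg_apply, map_add]
      abel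
    rw [heq] at h5
    exact h5
  have hint : IntervalIntegrable
      (fun τ => NormedSpace.exp ((t - τ) • A) * (B τ * Φ τ s)) MeasureTheory.volume s t := by
    apply ContinuousOn.intervalIntegrable
    rw [uIcc_of_le hst]
    apply ContinuousOn.mul
    · exact ((continuous_iff_continuousAt.2 fun x => (NormedSpace.exp_analytic (𝕂 := ℝ) x).continuousAt).comp
        ((continuous_const.sub continuous_id).smul continuous_const)).continuousOn
    · exact ((hB_cont.mono hsub).mul hΦc)
  have hftc := intervalIntegral.integral_eq_sub_of_hasDerivAt
    (by rw [uIcc_of_le hst]; exact hF') hint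
  rw [hftc]
  have h1 : Φ s s = 1 := by rw [hΦ_init s hs]; rfl
  rw [h1, mul_one, sub_self]
  have hz : ((0:ℝ) • A) = 0 := zero_smul ℝ A
  rw [hz, NormedSpace.exp_zero, one_mul]
  abel

/-- If `‖e^{tA}‖ ≤ C e^{-λ t}` for `t ≥ 0` (`C ≥ 1`, `λ > 0`) and `B(t)`
is a continuous matrix-valued function on `[t₀, ∞)` with `B(t) → 0` as `t → ∞`, then for
any `0 < μ < λ` there are `t₁ ≥ t₀` and `C' > 0` such that the transition matrix
`Φ(t,s)` of `ẏ = (A + B(t)) y` satisfies `‖Φ(t,s)‖ ≤ C' e^{-μ(t-s)}` for `t ≥ s ≥ t₁`. -/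
theorem stmt4 (d : ℕ)
    (A : EuclideanSpace ℝ (Fin d) →L[ℝ] EuclideanSpace ℝ (Fin d))
    (C lam : ℝ) (hC : 1 ≤ C) (hlam : 0 < lam)
    (hA : ∀ t : ℝ, 0 ≤ t → ‖NormedSpace.exp (t • A)‖ ≤ C * Real.exp (-lam * t))
    (t₀ : ℝ)
    (B : ℝ → (EuclideanSpace ℝ (Fin d) →L[ℝ] EuclideanSpace ℝ (Fin d)))
    (hB_cont : ContinuousOn B (Ici t₀))
    (hB_lim : Tendsto B atTop (𝓝 0))
    (Φ : ℝ → ℝ → (EuclideanSpace ℝ (Fin d) →L[ℝ] EuclideanSpace ℝ (Fin d)))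
    (hΦ_init : ∀ s ∈ Ici t₀, Φ s s = ContinuousLinearMap.id ℝ _)
    (hΦ_ode : ∀ s ∈ Ici t₀, ∀ t ∈ Ici t₀,
      HasDerivAt (fun τ => Φ τ s) ((A + B t).comp (Φ t s)) t) :
    ∀ μ : ℝ, 0 < μ → μ < lam →
      ∃ t₁ : ℝ, t₀ ≤ t₁ ∧ ∃ C' > (0 : ℝ), ∀ s t : ℝ, t₁ ≤ s → s ≤ t →
        ‖Φ t s‖ ≤ C' * Real.exp (-μ * (t - s)) := by
  intro μ hμ hμlam
  have hC0 : (0:ℝ) < C := lt_of_lt_of_le one_pos hC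
  set ε := (lam - μ) / C with hεdef
  have hε : 0 < ε := div_pos (by linarith) hC0
  have hKε : C * ε = lam - μ := by
    rw [hεdef]; field_simp
  obtain ⟨T, hT⟩ : ∃ T : ℝ, ∀ τ, T ≤ τ → ‖B τ‖ ≤ ε := by
    have h := NormedAddCommGroup.tendsto_nhds_zero.mp hB_lim ε hε
    rw [eventually_atTop] at h
    obtain ⟨T, hT⟩ := h
    exact ⟨T, fun τ hτ => (hT τ hτ).le⟩
  refine ⟨max t₀ T, le_max_left _ _, C, hC0, ?_⟩
  intro s t hs hst
  have hs0 : t₀ ≤ s := le_trans (le_max_left _ _) hs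
  have hsT : T ≤ s := le_trans (le_max_right _ _) hs
  -- auxiliary function u
  set u : ℝ → ℝ := fun τ => Real.exp (lam * (τ - s)) * ‖Φ (max τ t₀) s‖ with hu
  have hΦcont : Continuous fun τ : ℝ => Φ (max τ t₀) s := by
    have h1 : ContinuousOn (fun τ => Φ τ s) (Ici t₀) := fun x hx =>
      (hΦ_ode s hs0 x hx).continuousAt.continuousWithinAt
    exact h1.comp_continuous (continuous_id.max continuous_const)
      (fun x => mem_Ici.mpr (le_max_right _ _))
  have hucont : Continuous u :=
    ((Real.continuous_exp.comp (continuous_const.mul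
      (continuous_id.sub continuous_const)))).mul hΦcont.norm
  have hu0 : ∀ τ, 0 ≤ u τ := fun τ => mul_nonneg (Real.exp_pos _).le (norm_nonneg _)
  -- key integral inequality
  have hkey : ∀ τ ∈ Icc s t, u τ ≤ C + (C * ε) * ∫ x in s..τ, u x := by
    intro τ hτ
    have hsτ : s ≤ τ := hτ.1
    have hτ0 : t₀ ≤ τ := le_trans hs0 hsτ
    have hvoc := voc_aux A t₀ B hB_cont Φ hΦ_init hΦ_ode hs0 hsτ
    have hmax : ∀ x ∈ Icc s τ, max x t₀ = x := fun x hx =>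
      max_eq_left (le_trans hs0 hx.1)
    -- pointwise bound on the integrand
    have hptw : ∀ x ∈ Icc s τ,
        ‖NormedSpace.exp ((τ - x) • A) * (B x * Φ x s)‖
          ≤ Real.exp (-(lam * (τ - s))) * ((C * ε) * u x) := by
      intro x hx
      have hx0 : 0 ≤ τ - x := by linarith [hx.2]
      have hxs : t₀ ≤ x := le_trans hs0 hx.1
      have hBx : ‖B x‖ ≤ ε := hT x (le_trans hsT hx.1)
      have h1 : ‖NormedSpace.exp ((τ - x) • A) * (B x * Φ x s)‖
          ≤ ‖NormedSpace.exp ((τ - x) • A)‖ * (‖B x‖ * ‖Φ x s‖) :=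
        le_trans (norm_mul_le _ _) (by
          gcongr
          exact norm_mul_le _ _)
      have h2 : ‖NormedSpace.exp ((τ - x) • A)‖ ≤ C * Real.exp (-lam * (τ - x)) :=
        hA (τ - x) hx0
      have h3 : ‖NormedSpace.exp ((τ - x) • A)‖ * (‖B x‖ * ‖Φ x s‖)
          ≤ (C * Real.exp (-lam * (τ - x))) * (ε * ‖Φ x s‖) := by
        gcongr
      refine le_trans h1 (le_trans h3 (le_of_eq ?_))
      have hux : u x = Real.exp (lam * (x - s)) * ‖Φ x s‖ := by
        rw [hu]; simp only; rw [hmax x hx]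
      rw [hux]
      have e : Real.exp (-lam * (τ - x))
          = Real.exp (-(lam * (τ - s))) * Real.exp (lam * (x - s)) := by
        rw [← Real.exp_add]; congr 1; ring
      rw [e]; ring
    -- integrability of both sides
    have hcontnorm : ContinuousOn
        (fun x => ‖NormedSpace.exp ((τ - x) • A) * (B x * Φ x s)‖) (Icc s τ) := by
      apply ContinuousOn.norm
      apply ContinuousOn.mul
      · exact ((continuous_iff_continuousAt.2 fun x => (NormedSpace.exp_analytic (𝕂 := ℝ) x).continuousAt).comp
          ((continuous_const.sub continuous_id).smul continuous_const)).continuousOn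
      · exact ((hB_cont.mono (fun x hx => le_trans hs0 hx.1)).mul
          (fun x hx => (hΦ_ode s hs0 x (le_trans hs0 hx.1)).continuousAt.continuousWithinAt))
    have hint1 : IntervalIntegrable
        (fun x => ‖NormedSpace.exp ((τ - x) • A) * (B x * Φ x s)‖)
        MeasureTheory.volume s τ := by
      apply ContinuousOn.intervalIntegrable
      rwa [uIcc_of_le hsτ]
    have hint2 : IntervalIntegrable
        (fun x => Real.exp (-(lam * (τ - s))) * ((C * ε) * u x))
        MeasureTheory.volume s τ :=
      ((continuous_const.mul (continuous_const.mul hucont)).intervalIntegrable s τ)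
    -- assemble
    have hnorm1 : ‖Φ τ s‖ ≤ C * Real.exp (-lam * (τ - s))
        + Real.exp (-(lam * (τ - s))) * ((C * ε) * ∫ x in s..τ, u x) := by
      calc ‖Φ τ s‖
          ≤ ‖NormedSpace.exp ((τ - s) • A)‖
            + ‖∫ x in s..τ, NormedSpace.exp ((τ - x) • A) * (B x * Φ x s)‖ := by
            rw [hvoc]; exact norm_add_le _ _
        _ ≤ C * Real.exp (-lam * (τ - s))
            + ∫ x in s..τ, ‖NormedSpace.exp ((τ - x) • A) * (B x * Φ x s)‖ := by
            gcongr
            · exact hA (τ - s) (by linarith)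
            · exact intervalIntegral.norm_integral_le_integral_norm hsτ
        _ ≤ C * Real.exp (-lam * (τ - s))
            + ∫ x in s..τ, Real.exp (-(lam * (τ - s))) * ((C * ε) * u x) := by
            gcongr
            exact intervalIntegral.integral_mono_on hsτ hint1 hint2 hptw
        _ = C * Real.exp (-lam * (τ - s))
            + Real.exp (-(lam * (τ - s))) * ((C * ε) * ∫ x in s..τ, u x) := by
            rw [intervalIntegral.integral_const_mul, intervalIntegral.integral_const_mul]
    have huτ : u τ = Real.exp (lam * (τ - s)) * ‖Φ τ s‖ := by
      rw [hu]; simp only; rw [max_eq_left hτ0]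
    rw [huτ]
    have hexppos := Real.exp_pos (lam * (τ - s))
    have hmul := mul_le_mul_of_nonneg_left hnorm1 hexppos.le
    calc Real.exp (lam * (τ - s)) * ‖Φ τ s‖
        ≤ Real.exp (lam * (τ - s)) * (C * Real.exp (-lam * (τ - s))
          + Real.exp (-(lam * (τ - s))) * ((C * ε) * ∫ x in s..τ, u x)) := hmul
      _ = C + (C * ε) * ∫ x in s..τ, u x := by
          rw [mul_add]
          congr 1
          · rw [mul_comm C, ← mul_assoc, ← Real.exp_add]
            have : lam * (τ - s) + -lam * (τ - s) = 0 := by ring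
            rw [this, Real.exp_zero, one_mul]
          · rw [← mul_assoc, ← Real.exp_add]
            have : lam * (τ - s) + -(lam * (τ - s)) = 0 := by ring
            rw [this, Real.exp_zero, one_mul]
  -- Grönwall
  have hgr := gronwall_int_aux hst hC0.le (mul_nonneg hC0.le hε.le) hucont hu0 hkey
  have hut : u t = Real.exp (lam * (t - s)) * ‖Φ t s‖ := by
    rw [hu]; simp only; rw [max_eq_left (le_trans hs0 hst)]
  rw [hut, hKε] at hgr
  -- conclude
  have hfin := mul_le_mul_of_nonneg_left hgr (Real.exp_pos (-(lam * (t - s)))).le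
  calc ‖Φ t s‖
      = Real.exp (-(lam * (t - s))) * (Real.exp (lam * (t - s)) * ‖Φ t s‖) := by
        rw [← mul_assoc, ← Real.exp_add]
        have : -(lam * (t - s)) + lam * (t - s) = 0 := by ring
        rw [this, Real.exp_zero, one_mul]
    _ ≤ Real.exp (-(lam * (t - s))) * (C * Real.exp ((lam - μ) * (t - s))) := hfin
    _ = C * Real.exp (-μ * (t - s)) := by
        rw [mul_comm (Real.exp (-(lam * (t - s)))), mul_assoc, ← Real.exp_add]
        have : (lam - μ) * (t - s) + -(lam * (t - s)) = -μ * (t - s) := by ring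
        rw [this]
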